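/- Let R be a commutative unitary ring whose multiplicative semigroup has finite Erdős-Burgess constant I(S_R). Then either R is finite, or: the Jacobson radical J(R) is finite and R/J(R) is isomorphic as a ring to B × ∏_{i=1}^t F_{q_i}, where B is an infinite Boolean unitary ring, 0 ≤ t ≤ I(S_R) − 1, and q_1,...,q_t are prime powers with each q_i > 2. -/

import Mathlib

/-- Product of the nonempty list `a :: l` in a semigroup. -/
def sprod {α : Type*} [Mul α] (a : α) (l : List α) : α := l.foldl (· * ·) a

/-- A list is idempotent-product free if no nonempty sublist has idempotent product. -/
def IdemProdFree {α : Type*} [Mul α] (l : List α) : Prop :=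
  ∀ (a : α) (t : List α), (a :: t).Sublist l → ¬ IsIdempotentElem (sprod a t)

/-- The Erdős–Burgess constant of a (commutative) semigroup, as an extended natural:
the supremum of `|T| + 1` over all idempotent-product free sequences `T`. -/
noncomputable def EB (α : Type*) [Mul α] : ℕ∞ :=
  ⨆ l ∈ {l : List α | IdemProdFree l}, ((l.length : ℕ∞) + 1)

namespace EBProof

variable {R : Type} [CommRing R]

theorem sprod_eq_prod (a : R) (l : List R) : sprod a l = (a :: l).prod := by
  show l.foldl (· * ·) a = (a :: l).prod
  rw [List.prod_cons]
  induction l generalizing a with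
  | nil => simp
  | cons b t ih => simp [ih, mul_assoc]

theorem idemProdFree_iff (l : List R) :
    IdemProdFree l ↔ ∀ s : List R, s.Sublist l → s ≠ [] → ¬ IsIdempotentElem s.prod := by
  constructor
  · intro H s hs hne
    obtain ⟨a, t, rfl⟩ := List.exists_cons_of_ne_nil hne
    rw [← sprod_eq_prod]
    exact H a t hs
  · intro H a t ht
    rw [sprod_eq_prod]
    exact H _ ht (by simp)

theorem EB_lower {l : List R} (hl : IdemProdFree l) : (l.length : ℕ∞) + 1 ≤ EB R := by
  exact le_biSup (fun l : List R => ((l.length : ℕ∞) + 1)) hl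

theorem exists_bound (h : EB R ≠ ⊤) :
    ∃ n : ℕ, ∀ l : List R, IdemProdFree l → l.length < n := by
  obtain ⟨n, hn⟩ := WithTop.ne_top_iff_exists.mp h
  refine ⟨n, fun l hl => ?_⟩
  have := EB_lower hl
  rw [← hn] at this
  have : ((l.length + 1 : ℕ) : ℕ∞) ≤ (n : ℕ∞) := by push_cast; exact this
  exact_mod_cast this

theorem pow_idem {n : ℕ} (hn : ∀ l : List R, IdemProdFree l → l.length < n) (x : R) :
    ∃ k, 0 < k ∧ k ≤ n ∧ IsIdempotentElem (x ^ k) := by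
  have : ¬ IdemProdFree (List.replicate n x) := by
    intro H
    simpa using hn _ H
  rw [idemProdFree_iff] at this
  push_neg at this
  obtain ⟨s, hs, hne, hidem⟩ := this
  obtain ⟨k, hk, rfl⟩ := List.sublist_replicate_iff.mp hs
  refine ⟨k, ?_, hk, by rwa [List.prod_replicate] at hidem⟩
  cases k with
  | zero => simp at hne
  | succ k => omega

theorem unit_idem_eq_one {e : R} (hu : IsUnit e) (he : IsIdempotentElem e) : e = 1 := by
  obtain ⟨u, rfl⟩ := hu
  have : u * u = u := Units.ext (by simpa [IsIdempotentElem] using he)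
  have : u = 1 := by
    have := mul_right_cancel (a := u) (b := u) (c := 1) (by simpa using this)
    exact this
  simp [this]

/-- If the Jacobson radical is infinite, there are arbitrarily long lists of elements of
`1 + J` with no nonempty sublist product equal to `1`. -/
theorem exists_long_list (hJ : Infinite (Ideal.jacobson (⊥ : Ideal R))) (m : ℕ) :
    ∃ l : List R, l.length = m ∧ (∀ y ∈ l, y - 1 ∈ Ideal.jacobson (⊥ : Ideal R)) ∧
      (∀ s : List R, s.Sublist l → s ≠ [] → s.prod ≠ 1) := by
  set J := Ideal.jacobson (⊥ : Ideal R) with hJdef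
  induction m with
  | zero => exact ⟨[], rfl, by simp, by simp (config := {contextual := true})⟩
  | succ m ih =>
    obtain ⟨l, hlen, hmem, hprod⟩ := ih
    -- bad set
    set bad : Set R := {u | ∃ s ∈ l.sublists, s.prod * u = 1} with hbad
    have hbadfin : bad.Finite := by
      have : bad ⊆ (fun s : List R => Ring.inverse s.prod) '' {s | s ∈ l.sublists} := by
        rintro u ⟨s, hs, hsu⟩
        refine ⟨s, hs, ?_⟩
        have hu : IsUnit s.prod := by
          refine List.prod_isUnit fun y hy => ?_
          have : y ∈ l := List.Sublist.subset (List.mem_sublists.mp hs) hy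
          exact Ideal.isUnit_of_sub_one_mem_jacobson_bot y (hmem y this)
        calc Ring.inverse s.prod = Ring.inverse s.prod * (s.prod * u) := by rw [hsu, mul_one]
        _ = (Ring.inverse s.prod * s.prod) * u := by ring
        _ = u := by rw [Ring.inverse_mul_cancel _ hu, one_mul]
      exact Set.Finite.subset (Set.Finite.image _ (List.finite_toSet l.sublists)) this
    have hrange : (Set.range (fun x : J => 1 + (x : R))).Infinite := by
      apply Set.infinite_range_of_injective
      intro a b hab
      have : (a : R) = b := by
        have := add_left_cancel hab
        exact this
      exact Subtype.ext this
    obtain ⟨u, hu⟩ := ((hrange.diff hbadfin).nonempty)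
    obtain ⟨⟨x, hx⟩, rfl⟩ := hu.1
    have hunotbad : (1 + x) ∉ bad := hu.2
    refine ⟨(1 + x) :: l, by simp [hlen], ?_, ?_⟩
    · rintro y hy
      rcases List.mem_cons.mp hy with rfl | hy
      · simpa using hx
      · exact hmem y hy
    · intro s hs hne
      rcases List.sublist_cons_iff.mp hs with hs' | ⟨r, rfl, hr⟩
      · exact hprod s hs' hne
      · intro hone
        apply hunotbad
        refine ⟨r, List.mem_sublists.mpr hr, ?_⟩
        rw [List.prod_cons] at hone
        rw [mul_comm]; linear_combination hone
theorem jacobson_finite {n : ℕ} (hn : ∀ l : List R, IdemProdFree l → l.length < n) :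
    Finite (Ideal.jacobson (⊥ : Ideal R)) := by
  by_contra hinf
  rw [not_finite_iff_infinite] at hinf
  obtain ⟨l, hlen, hmem, hprod⟩ := exists_long_list hinf n
  have : IdemProdFree l := by
    rw [idemProdFree_iff]
    intro s hs hne hidem
    refine hprod s hs hne (unit_idem_eq_one ?_ hidem)
    refine List.prod_isUnit fun y hy => ?_
    exact Ideal.isUnit_of_sub_one_mem_jacobson_bot y (hmem y (hs.subset hy))
  have := hn l this
  omega
/-- A maximal ideal is big if the residue ring has an element other than 0, 1. -/
def Big (m : Ideal R) : Prop := m.IsMaximal ∧ ∃ c : R, c ∉ m ∧ c - 1 ∉ m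

theorem crt_list (T : Finset (Ideal R)) (hT : ∀ m ∈ T, Big m) :
    ∃ l : List R, l.length = T.card ∧ IdemProdFree l := by
  classical
  set ι := {m : Ideal R // m ∈ T}
  have hcop : Pairwise fun (i j : ι) => IsCoprime (i : Ideal R) (j : Ideal R) := by
    intro i j hij
    rw [Ideal.isCoprime_iff_sup_eq]
    exact Ideal.IsMaximal.coprime_of_ne (hT i i.2).1 (hT j j.2).1
      (fun h => hij (Subtype.ext h))
  have hwit : ∀ i : ι, ∃ c : R, c ∉ (i : Ideal R) ∧ c - 1 ∉ (i : Ideal R) :=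
    fun i => (hT i i.2).2
  choose c hc1 hc2 using hwit
  have key : ∀ i : ι, ∃ u : R, (u - c i ∈ (i : Ideal R)) ∧
      ∀ j : ι, j ≠ i → u - 1 ∈ (j : Ideal R) := by
    intro i
    obtain ⟨u, hu⟩ := Ideal.exists_forall_sub_mem_ideal hcop
      (fun j => if j = i then c i else 1)
    refine ⟨u, by simpa using hu i, fun j hj => by simpa [hj] using hu j⟩
  choose u hu1 hu2 using key
  set L : List ι := T.attach.toList
  refine ⟨L.map u, by simp [L]; exact Finset.card_attach, ?_⟩
  rw [idemProdFree_iff]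
  intro s hs hne hidem
  obtain ⟨r, hr, rfl⟩ := List.sublist_map_iff.mp hs
  have hrnd : r.Nodup := hr.nodup (Finset.nodup_toList _)
  obtain ⟨i, r', rfl⟩ := List.exists_cons_of_ne_nil (by simpa using hne)
  have hinot : i ∉ r' := by simpa using (List.nodup_cons.mp hrnd).1
  set mk := Ideal.Quotient.mk (i : Ideal R)
  have hmkp : mk ((List.map u (i :: r')).prod) = mk (c i) := by
    rw [List.map_cons, List.prod_cons, map_mul]
    have h1 : mk (u i) = mk (c i) := Ideal.Quotient.eq.mpr (hu1 i)
    have h2 : mk ((List.map u r').prod) = 1 := by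
      rw [map_list_prod]
      apply List.prod_eq_one
      intro x hx
      simp only [List.map_map, List.mem_map] at hx
      obtain ⟨j, hj, rfl⟩ := hx
      have hji : j ≠ i := fun h => hinot (h ▸ hj)
      show mk (u j) = 1
      rw [← map_one mk, Ideal.Quotient.eq]
      exact hu2 j i hji.symm
    rw [h1, h2, mul_one]
  have : mk (c i) * mk (c i) = mk (c i) := by
    rw [← hmkp, ← map_mul, hidem]
  have hmem : c i * (c i - 1) ∈ (i : Ideal R) := by
    have : mk (c i * c i - c i) = 0 := by
      rw [map_sub, map_mul, this, sub_self]
    have := Ideal.Quotient.eq_zero_iff_mem.mp this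
    convert this using 1; ring
  have hprime : (i : Ideal R).IsPrime := (hT i i.2).1.isPrime
  rcases hprime.mem_or_mem hmem with h | h
  · exact hc1 i h
  · exact hc2 i h

theorem big_finite {n : ℕ} (hn : ∀ l : List R, IdemProdFree l → l.length < n) :
    {m : Ideal R | Big m}.Finite := by
  by_contra hinf
  have hinf' : Set.Infinite {m : Ideal R | Big m} := hinf
  obtain ⟨T, hTsub, hTcard⟩ := hinf'.exists_subset_card_eq n
  obtain ⟨l, hlen, hfree⟩ := crt_list T (fun m hm => hTsub hm)
  have := hn l hfree
  omega

theorem quotient_finite {n : ℕ} (hpow : ∀ x : R, ∃ k, 0 < k ∧ k ≤ n ∧ IsIdempotentElem (x ^ k))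
    (m : Ideal R) (hm : m.IsMaximal) : Finite (R ⧸ m) := by
  haveI := hm
  letI : Field (R ⧸ m) := Ideal.Quotient.field m
  have key : ∀ y : R ⧸ m, y = 0 ∨ y ^ (Nat.factorial n) = 1 := by
    intro y
    obtain ⟨x, rfl⟩ := Ideal.Quotient.mk_surjective y
    obtain ⟨k, hk0, hkn, hidem⟩ := hpow x
    set y := Ideal.Quotient.mk m x
    have he : (y ^ k) * (y ^ k) = y ^ k := by
      have := congrArg (Ideal.Quotient.mk m) hidem
      simpa [map_pow] using this
    have : y ^ k = 0 ∨ y ^ k = 1 := by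
      rcases mul_eq_zero.mp (by linear_combination he : (y ^ k) * (y ^ k - 1) = 0) with h | h
      · exact Or.inl h
      · exact Or.inr (by linear_combination h)
    rcases this with h | h
    · exact Or.inl (pow_eq_zero_iff hk0.ne' |>.mp h)
    · right
      obtain ⟨d, hd⟩ := Nat.dvd_factorial hk0 hkn
      rw [hd, pow_mul, h, one_pow]
  have hq : (Polynomial.X ^ (Nat.factorial n) - 1 : Polynomial (R ⧸ m)) ≠ 0 := by
    intro h
    have := congrArg (fun p => Polynomial.coeff p 0) h
    simp only [Polynomial.coeff_sub, Polynomial.coeff_X_pow, Polynomial.coeff_zero,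
      Polynomial.coeff_one, if_neg (Nat.factorial_pos n).ne] at this
    simp at this
  have hsub : (Set.univ : Set (R ⧸ m)) ⊆
      insert 0 {y | Polynomial.IsRoot (Polynomial.X ^ (Nat.factorial n) - 1) y} := by
    intro y _
    rcases key y with h | h
    · exact Or.inl h
    · exact Or.inr (by simp [Polynomial.IsRoot, h])
  have : (Set.univ : Set (R ⧸ m)).Finite :=
    Set.Finite.subset (Set.Finite.insert 0 (Polynomial.finite_setOf_isRoot hq)) hsub
  exact Set.finite_univ_iff.mp this

theorem quotient_card (m : Ideal R) (hb : Big m) [Finite (R ⧸ m)] :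
    2 < Nat.card (R ⧸ m) ∧ IsPrimePow (Nat.card (R ⧸ m)) := by
  classical
  haveI := hb.1
  letI : Field (R ⧸ m) := Ideal.Quotient.field m
  haveI : Fintype (R ⧸ m) := Fintype.ofFinite _
  obtain ⟨c, hc1, hc2⟩ := hb.2
  constructor
  · have h01 : (0 : R ⧸ m) ≠ 1 := zero_ne_one
    have hc0 : Ideal.Quotient.mk m c ≠ 0 := by
      simpa [Ideal.Quotient.eq_zero_iff_mem] using hc1
    have hcone : Ideal.Quotient.mk m c ≠ 1 := by
      intro h
      exact hc2 (Ideal.Quotient.eq.mp (by simpa using h))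
    have hcard : ({0, 1, Ideal.Quotient.mk m c} : Finset (R ⧸ m)).card = 3 := by
      rw [Finset.card_insert_of_notMem (by simp [h01, hc0.symm]),
        Finset.card_insert_of_notMem (by simp [hcone.symm]), Finset.card_singleton]
    have := Finset.card_le_univ ({0, 1, Ideal.Quotient.mk m c} : Finset (R ⧸ m))
    rw [hcard] at this
    rw [Nat.card_eq_fintype_card]
    omega
  · obtain ⟨k, hp, hcard⟩ := FiniteField.card (R ⧸ m) (ringChar (R ⧸ m))
    exact ⟨ringChar (R ⧸ m), k, hp.prime, k.2, by rw [← hcard, Nat.card_eq_fintype_card]⟩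
theorem finite_of_quotient (J : Ideal R) [Finite J] [Finite (R ⧸ J)] : Finite R := by
  have hfib : ∀ y : R ⧸ J, Finite {x : R // Ideal.Quotient.mk J x = y} := by
    intro y
    obtain ⟨x₀, rfl⟩ := Ideal.Quotient.mk_surjective y
    refine Finite.of_injective
      (fun z : {x : R // Ideal.Quotient.mk J x = Ideal.Quotient.mk J x₀} =>
        (⟨z.1 - x₀, Ideal.Quotient.eq.mp z.2⟩ : J)) ?_
    rintro ⟨a, ha⟩ ⟨b, hb⟩ hab
    simp only [Subtype.mk.injEq] at hab ⊢
    exact sub_left_injective hab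
  exact Finite.of_equiv _ (Equiv.sigmaFiberEquiv (Ideal.Quotient.mk J))

theorem jacobson_eq_sInf_maximal :
    Ideal.jacobson (⊥ : Ideal R) = sInf {m : Ideal R | m.IsMaximal} := by
  simp [Ideal.jacobson, bot_le]

end EBProof

open EBProof in
theorem stmt_15 (R : Type) [CommRing R] (h : EB R ≠ ⊤) :
    Finite R ∨
    (Finite (Ideal.jacobson (⊥ : Ideal R)) ∧
      ∃ (B : Type) (instB : CommRing B) (t : ℕ) (F : Fin t → Type)
        (instF : ∀ i, Field (F i)),
        Infinite B ∧
        (letI := instB; ∀ x : B, x * x = x) ∧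
        (t : ℕ∞) + 1 ≤ EB R ∧
        (∀ i, 2 < Nat.card (F i) ∧ IsPrimePow (Nat.card (F i))) ∧
        (letI := instB; letI := instF;
          Nonempty ((R ⧸ Ideal.jacobson (⊥ : Ideal R)) ≃+* B × ∀ i, F i))) := by
  classical
  by_cases hR : Finite R
  · exact Or.inl hR
  right
  obtain ⟨n, hn⟩ := exists_bound h
  have hpow := pow_idem hn
  haveI hJfin : Finite (Ideal.jacobson (⊥ : Ideal R)) := jacobson_finite hn
  refine ⟨hJfin, ?_⟩
  have hbigfin : {m : Ideal R | Big m}.Finite := big_finite hn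
  set T : Finset (Ideal R) := hbigfin.toFinset with hTdef
  set t := T.card with htdef
  set f : Fin t → Ideal R := fun i => (T.equivFin.symm i : Ideal R) with hfdef
  have hfB : ∀ i, Big (f i) := fun i => hbigfin.mem_toFinset.mp (T.equivFin.symm i).2
  have hfinj : Function.Injective f := by
    intro i j hij
    have := T.equivFin.symm.injective (Subtype.ext hij)
    exact this
  have hfsurj : ∀ m : Ideal R, Big m → ∃ i, f i = m := by
    intro m hm
    have hmT : m ∈ T := hbigfin.mem_toFinset.mpr hm
    exact ⟨T.equivFin ⟨m, hmT⟩, by simp [hfdef]⟩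
  set K : Ideal R := ⨅ i, f i with hKdef
  set K' : Ideal R := sInf {m : Ideal R | m.IsMaximal ∧ ¬ Big m} with hK'def
  -- squares
  have hsq : ∀ x : R, x * x - x ∈ K' := by
    intro x
    rw [hK'def, Submodule.mem_sInf]
    rintro m ⟨hmax, hnb⟩
    have : ∀ c : R, c ∈ m ∨ c - 1 ∈ m := by
      intro c
      by_contra hc
      push_neg at hc
      exact hnb ⟨hmax, c, hc⟩
    have hxx : x * x - x = x * (x - 1) := by ring
    rw [hxx]
    rcases this x with hx | hx
    · exact Ideal.mul_mem_right _ m hx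
    · exact Ideal.mul_mem_left m x hx
  -- sup
  have hsup : K ⊔ K' = ⊤ := by
    by_contra hne
    obtain ⟨m, hmmax, hle⟩ := Ideal.exists_le_maximal _ hne
    have hKm : K ≤ m := le_trans le_sup_left hle
    have hK'm : K' ≤ m := le_trans le_sup_right hle
    have : ∃ i, f i ≤ m := by
      have huniv : Finset.univ.inf f ≤ m := by
        rw [Finset.inf_eq_iInf]
        simpa [hKdef] using hKm
      obtain ⟨i, _, hi⟩ := (Ideal.IsPrime.inf_le' hmmax.isPrime).mp huniv
      exact ⟨i, hi⟩
    obtain ⟨i, hi⟩ := this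
    have hfi : f i = m := (hfB i).1.eq_of_le hmmax.ne_top hi
    obtain ⟨c, hc1, hc2⟩ := (hfB i).2
    rw [hfi] at hc1 hc2
    have hcc : c * (c - 1) ∈ m := by
      have h1 : c * c - c ∈ m := hK'm (hsq c)
      have hxx : c * (c - 1) = c * c - c := by ring
      rwa [hxx]
    rcases (hmmax.isPrime.mem_or_mem hcc) with hx | hx
    · exact hc1 hx
    · exact hc2 hx
  -- inf
  have hinf2 : K ⊓ K' = Ideal.jacobson (⊥ : Ideal R) := by
    rw [jacobson_eq_sInf_maximal]
    apply le_antisymm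
    · apply le_sInf
      intro m hm
      by_cases hb : Big m
      · obtain ⟨i, rfl⟩ := hfsurj m hb
        exact le_trans inf_le_left (iInf_le f i)
      · exact le_trans inf_le_right (sInf_le ⟨hm, hb⟩)
    · refine le_inf (le_iInf fun i => sInf_le (hfB i).1) (le_sInf fun m hm => sInf_le hm.1)
  -- field instances
  haveI hmaxf : ∀ i, (f i).IsMaximal := fun i => (hfB i).1
  haveI hFfin : ∀ i, Finite (R ⧸ f i) := fun i => quotient_finite hpow (f i) (hfB i).1
  -- the equivalence
  have hpair : Pairwise (Function.onFun IsCoprime f) := by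
    intro i j hij
    exact Ideal.isCoprime_iff_sup_eq.mpr
      ((hfB i).1.coprime_of_ne (hfB j).1 (fun hh => hij (hfinj hh)))
  let e3 : (R ⧸ K) ≃+* ∀ i, R ⧸ f i :=
    Ideal.quotEquivOfEq hKdef |>.trans (Ideal.quotientInfRingEquivPiQuotient f hpair)
  let e2 : (R ⧸ (K' ⊓ K)) ≃+* (R ⧸ K') × (R ⧸ K) :=
    Ideal.quotientInfEquivQuotientProd K' K
      (Ideal.isCoprime_iff_sup_eq.mpr (by rw [sup_comm]; exact hsup))
  let e1 : (R ⧸ Ideal.jacobson (⊥ : Ideal R)) ≃+* R ⧸ (K' ⊓ K) :=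
    Ideal.quotEquivOfEq (by rw [inf_comm]; exact hinf2.symm)
  let e : (R ⧸ Ideal.jacobson (⊥ : Ideal R)) ≃+* (R ⧸ K') × ∀ i, R ⧸ f i :=
    e1.trans (e2.trans (RingEquiv.prodCongr (RingEquiv.refl _) e3))
  refine ⟨R ⧸ K', inferInstance, t, fun i => R ⧸ f i,
    fun i => Ideal.Quotient.field (f i), ?_, ?_, ?_, ?_, ⟨e⟩⟩
  · -- Infinite
    rw [← not_finite_iff_infinite]
    intro hBfin
    haveI := hBfin
    haveI : Finite ((R ⧸ K') × ∀ i, R ⧸ f i) := inferInstance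
    haveI : Finite (R ⧸ Ideal.jacobson (⊥ : Ideal R)) := Finite.of_equiv _ e.symm.toEquiv
    exact hR (finite_of_quotient (Ideal.jacobson (⊥ : Ideal R)))
  · -- Boolean
    intro x
    obtain ⟨y, rfl⟩ := Ideal.Quotient.mk_surjective x
    have : Ideal.Quotient.mk K' (y * y - y) = 0 := Ideal.Quotient.eq_zero_iff_mem.mpr (hsq y)
    rw [map_sub, map_mul] at this
    linear_combination this
  · -- t + 1 ≤ EB R
    obtain ⟨l, hlen, hfree⟩ := crt_list T (fun m hm => hbigfin.mem_toFinset.mp hm)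
    have := EB_lower hfree
    rwa [hlen] at this
  · -- cards
    intro i
    exact quotient_card (f i) (hfB i)
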